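/- Let G be a group with finite symmetric generating set S (e ∉ S) such that κ(a) = 0 for all a ∈ S. Then G is virtually abelian; more precisely, the center Z(G) has finite index in G. -/

import Mathlib

open Filter Topology

section WL
variable {G : Type*} [Group G]

/-- Word length of `g` with respect to a generating set `S`. -/
noncomputable def wl (S : Set G) (g : G) : ℕ :=
  sInf {n | ∃ l : List G, (∀ x ∈ l, x ∈ S) ∧ l.length = n ∧ l.prod = g}

/-- Average word length of conjugates of `g` by elements of `S`. -/
noncomputable def Av (S : Finset G) (g : G) : ℝ :=
  (∑ a ∈ S, (wl (S : Set G) (a⁻¹ * g * a) : ℝ)) / S.card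

/-- Medium-scale Ricci curvature `κ(g) = (|g| - Av(g))/|g|`. -/
noncomputable def curv (S : Finset G) (g : G) : ℝ :=
  ((wl (S : Set G) g : ℝ) - Av S g) / (wl (S : Set G) g)

end WL

theorem stmt11 {G : Type*} [Group G] (S : Finset G)
    (hgen : Subgroup.closure (S : Set G) = ⊤)
    (hsym : ∀ a ∈ S, a⁻¹ ∈ S) (hid : (1 : G) ∉ S)
    (hcurv : ∀ a ∈ S, curv S a = 0) :
    (Subgroup.center G).FiniteIndex := by
  classical
  -- every element of G is a product of elements of S
  have hword : ∀ g : G, ∃ l : List G, (∀ x ∈ l, x ∈ (S : Set G)) ∧ l.prod = g := by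
    intro g
    have hg : g ∈ Submonoid.closure ((S : Set G) ∪ (S : Set G)⁻¹) := by
      rw [← Subgroup.closure_toSubmonoid]
      exact hgen ▸ Subgroup.mem_top g
    have hunion : (S : Set G) ∪ (S : Set G)⁻¹ = (S : Set G) := by
      apply Set.union_eq_self_of_subset_right
      intro x hx
      rw [Set.mem_inv] at hx
      have := hsym _ hx
      simpa using this
    rw [hunion] at hg
    exact Submonoid.exists_list_of_mem_closure hg
  -- wl of a nontrivial element is ≥ 1
  have hwl_pos : ∀ g : G, g ≠ 1 → wl (S : Set G) g ≠ 0 := by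
    intro g hg h0
    obtain ⟨l, hl, hprod⟩ := hword g
    have hne : {n | ∃ l : List G, (∀ x ∈ l, x ∈ (S : Set G)) ∧ l.length = n ∧ l.prod = g}.Nonempty :=
      ⟨l.length, l, hl, rfl, hprod⟩
    have := Nat.sInf_mem hne
    rw [show sInf _ = wl (S : Set G) g from rfl, h0] at this
    obtain ⟨l', hl', hlen, hprod'⟩ := this
    rw [List.length_eq_zero_iff] at hlen
    subst hlen
    simp at hprod'
    exact hg hprod'.symm
  -- wl of a generator is 1
  have hwl_one : ∀ a ∈ S, wl (S : Set G) a = 1 := by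
    intro a ha
    have hle : wl (S : Set G) a ≤ 1 :=
      Nat.sInf_le ⟨[a], by simpa using ha, rfl, by simp⟩
    have hne : wl (S : Set G) a ≠ 0 := hwl_pos a (by rintro rfl; exact hid ha)
    omega
  -- wl of a conjugate of a generator is 1 (membership in S)
  have hconj : ∀ a ∈ S, ∀ b ∈ S, a⁻¹ * b * a ∈ S := by
    intro a ha b hb
    -- first: wl (x⁻¹ * b * x) = 1 for all x ∈ S
    have hAv : Av S b = 1 := by
      have hc := hcurv b hb
      rw [curv, hwl_one b hb] at hc
      simp at hc
      linarith [hc]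
    have hcard : (S.card : ℝ) ≠ 0 := by
      have : S.Nonempty := ⟨a, ha⟩
      exact_mod_cast Finset.card_ne_zero_of_mem ha
    rw [Av, div_eq_one_iff_eq hcard] at hAv
    have hsum : ∑ x ∈ S, wl (S : Set G) (x⁻¹ * b * x) = S.card := by
      exact_mod_cast hAv
    have hone : ∀ x ∈ S, wl (S : Set G) (x⁻¹ * b * x) = 1 := by
      have hle : ∀ x ∈ S, 1 ≤ wl (S : Set G) (x⁻¹ * b * x) := by
        intro x hx
        have hne : x⁻¹ * b * x ≠ 1 := by
          intro h
          have : b = 1 := by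
            have := congrArg (fun y => x * y * x⁻¹) h
            simpa [mul_assoc] using this
          exact hid (this ▸ hb)
        exact Nat.one_le_iff_ne_zero.mpr (hwl_pos _ hne)
      have : ∑ x ∈ S, (1 : ℕ) = ∑ x ∈ S, wl (S : Set G) (x⁻¹ * b * x) := by
        simp [hsum, ← Finset.card_eq_sum_ones]
      intro x hx
      exact ((Finset.sum_eq_sum_iff_of_le hle).mp this x hx).symm
    have h1 : wl (S : Set G) (a⁻¹ * b * a) = 1 := hone a ha
    have hne : {n | ∃ l : List G, (∀ x ∈ l, x ∈ (S : Set G)) ∧ l.length = n ∧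
        l.prod = a⁻¹ * b * a}.Nonempty := by
      obtain ⟨l, hl, hprod⟩ := hword (a⁻¹ * b * a)
      exact ⟨l.length, l, hl, rfl, hprod⟩
    have hmem := Nat.sInf_mem hne
    rw [show sInf _ = wl (S : Set G) (a⁻¹ * b * a) from rfl, h1] at hmem
    obtain ⟨l, hl, hlen, hprod⟩ := hmem
    rw [List.length_eq_one_iff] at hlen
    obtain ⟨c, rfl⟩ := hlen
    simp at hprod
    exact hprod ▸ hl c (by simp)
  -- conjugation by any element of G preserves S
  have hconjG : ∀ g : G, ∀ b ∈ S, g⁻¹ * b * g ∈ S := by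
    have key : ∀ l : List G, (∀ x ∈ l, x ∈ (S : Set G)) →
        ∀ b ∈ S, (l.prod)⁻¹ * b * l.prod ∈ S := by
      intro l
      induction l with
      | nil => intro _ b hb; simpa using hb
      | cons x t ih =>
        intro hl b hb
        have hx : x ∈ S := hl x (by simp)
        have ht : ∀ y ∈ t, y ∈ (S : Set G) := fun y hy => hl y (by simp [hy])
        have h1 : x⁻¹ * b * x ∈ S := hconj x hx b hb
        have := ih ht _ h1
        simpa [mul_assoc] using this
    intro g b hb
    obtain ⟨l, hl, hprod⟩ := hword g
    exact hprod ▸ key l hl b hb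
  -- the conjugation permutation representation
  let φ : G →* Equiv.Perm {x // x ∈ S} :=
    { toFun := fun g =>
        { toFun := fun a => ⟨g * a.1 * g⁻¹, by
            have := hconjG g⁻¹ a.1 a.2; simpa using this⟩
          invFun := fun a => ⟨g⁻¹ * a.1 * g, hconjG g a.1 a.2⟩
          left_inv := by intro a; ext; simp [mul_assoc]
          right_inv := by intro a; ext; simp [mul_assoc] }
      map_one' := by ext a; simp
      map_mul' := by intro g h; ext a; simp [mul_assoc] }
  -- kernel of φ has finite index
  have hker : φ.ker.FiniteIndex := by
    constructor
    rw [Subgroup.index_ker]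
    exact Nat.card_pos.ne'
  -- kernel is contained in the center
  have hle : φ.ker ≤ Subgroup.center G := by
    intro g hg
    rw [Subgroup.mem_center_iff]
    intro h
    have hcomm : ∀ b ∈ S, g * b = b * g := by
      intro b hb
      have := congrArg (fun e => (e ⟨b, hb⟩ : {x // x ∈ S}).1) hg
      simp [φ] at this
      have : g * b * g⁻¹ = b := this
      calc g * b = (g * b * g⁻¹) * g := by group
        _ = b * g := by rw [this]
    have hh : h ∈ Subgroup.closure (S : Set G) := hgen ▸ Subgroup.mem_top h
    induction hh using Subgroup.closure_induction with
    | mem x hx => exact (hcomm x hx).symm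
    | one => simp
    | mul x y _ _ hx hy => rw [mul_assoc, hy, ← mul_assoc, hx, mul_assoc]
    | inv x _ hx =>
      have := congrArg (fun e => x⁻¹ * e * x⁻¹) hx
      simpa [mul_assoc] using this.symm
  exact Subgroup.finiteIndex_of_le (H := φ.ker) hle
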